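/- Let n ≥ 2, dᵢ > 0 for all i, δ > 0, and suppose all controls are admissible (δ ≥ d_N/bᵢ for all i). Then the total cooperative payoff strictly exceeds the total Nash payoff: Σᵢ Kᵢ(x₀, u*) > Σᵢ Kᵢ(x₀, u^{NE}), where Kᵢ(x₀,u) = ∫_{t₀}^T [uᵢ(bᵢ - uᵢ/2) - dᵢ x(t)] dt and x solves ẋ = Σuⱼ - δx, x(t₀)=x₀. -/

import Mathlib

open Finset in
/-- Adjoint trick: rewrite ∫ dN·x using the costate ψ(t) = dN/δ (1 - e^{δ(t-T)}). -/
lemma stmt16_aux (δ dN t₀ T : ℝ) (hδ : δ ≠ 0) (S x : ℝ → ℝ) (hS : Continuous S)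
    (hx : ∀ t, HasDerivAt x (S t - δ * x t) t) :
    ∫ t in t₀..T, dN * x t
      = (dN / δ * (1 - Real.exp (δ * (t₀ - T)))) * x t₀
        + ∫ t in t₀..T, (dN / δ * (1 - Real.exp (δ * (t - T)))) * S t := by
  set ψ : ℝ → ℝ := fun t => dN / δ * (1 - Real.exp (δ * (t - T))) with hψdef
  have hxc : Continuous x := continuous_iff_continuousAt.mpr fun t => (hx t).continuousAt
  have hψc : Continuous ψ := by fun_prop
  have hψ : ∀ t, HasDerivAt ψ (δ * ψ t - dN) t := by
    intro t
    have h1 : HasDerivAt (fun s : ℝ => δ * (s - T)) δ t := by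
      simpa using ((hasDerivAt_id t).sub_const T).const_mul δ
    have h2 : HasDerivAt (fun s : ℝ => Real.exp (δ * (s - T)))
        (δ * Real.exp (δ * (t - T))) t := by
      simpa [mul_comm] using h1.exp
    have h3 : HasDerivAt (fun s => dN / δ * (1 - Real.exp (δ * (s - T))))
        (dN / δ * (0 - δ * Real.exp (δ * (t - T)))) t :=
      ((hasDerivAt_const t (1 : ℝ)).sub h2).const_mul (dN / δ)
    convert h3 using 1
    simp only [hψdef]
    field_simp
    ring
  have hg : ∀ t, HasDerivAt (fun s => ψ s * x s) (ψ t * S t - dN * x t) t := by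
    intro t
    have h : HasDerivAt (fun s => ψ s * x s) ((δ * ψ t - dN) * x t + ψ t * (S t - δ * x t)) t :=
      (hψ t).mul (hx t)
    convert h using 1
    ring
  have hint : ∫ t in t₀..T, (ψ t * S t - dN * x t) = ψ T * x T - ψ t₀ * x t₀ :=
    intervalIntegral.integral_eq_sub_of_hasDerivAt (fun t _ => hg t)
      (((hψc.mul hS).sub (continuous_const.mul hxc)).intervalIntegrable _ _)
  have hψT : ψ T = 0 := by simp [hψdef]
  have h1 : IntervalIntegrable (fun t => ψ t * S t) MeasureTheory.volume t₀ T :=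
    (hψc.mul hS).intervalIntegrable _ _
  have h2 : IntervalIntegrable (fun t => dN * x t) MeasureTheory.volume t₀ T :=
    (continuous_const.mul hxc).intervalIntegrable _ _
  rw [intervalIntegral.integral_sub h1 h2, hψT] at hint
  simp only [hψdef, zero_mul] at hint
  linarith [hint]

open Finset in
/-- For n ≥ 2 players with all dᵢ > 0 and admissible controls (δ ≥ d_N/bᵢ),
the total cooperative payoff strictly exceeds the total Nash payoff. -/
theorem stmt16 (n : ℕ) (hn : 2 ≤ n) (b d : Fin n → ℝ) (δ t₀ T x₀ : ℝ)
    (hδ : 0 < δ) (ht : t₀ < T) (hb : ∀ i, 0 < b i) (hd : ∀ i, 0 < d i)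
    (dN : ℝ) (hdN : dN = ∑ i, d i)
    (hadm : ∀ i, dN / b i ≤ δ)
    (uNE ustar : Fin n → ℝ → ℝ)
    (hNE : ∀ i t, uNE i t = b i - d i / δ + d i / δ * Real.exp (δ * (t - T)))
    (hst : ∀ i t, ustar i t = b i - dN / δ + dN / δ * Real.exp (δ * (t - T)))
    (xNE xstar : ℝ → ℝ)
    (hxNE : ∀ t : ℝ, HasDerivAt xNE ((∑ j, uNE j t) - δ * xNE t) t)
    (hxNE0 : xNE t₀ = x₀)
    (hxs : ∀ t : ℝ, HasDerivAt xstar ((∑ j, ustar j t) - δ * xstar t) t)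
    (hxs0 : xstar t₀ = x₀) :
    (∑ i, ∫ t in t₀..T, (uNE i t * (b i - uNE i t / 2) - d i * xNE t))
      < ∑ i, ∫ t in t₀..T, (ustar i t * (b i - ustar i t / 2) - d i * xstar t) := by
  have hδ' : δ ≠ 0 := ne_of_gt hδ
  set ψ : ℝ → ℝ := fun t => dN / δ * (1 - Real.exp (δ * (t - T))) with hψdef
  have hψc : Continuous ψ := by fun_prop
  -- continuity of controls
  have hucNE : ∀ i, Continuous (uNE i) := by
    intro i
    have : uNE i = fun t => b i - d i / δ + d i / δ * Real.exp (δ * (t - T)) :=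
      funext (hNE i)
    rw [this]; fun_prop
  have hucS : ∀ i, Continuous (ustar i) := by
    intro i
    have : ustar i = fun t => b i - dN / δ + dN / δ * Real.exp (δ * (t - T)) :=
      funext (hst i)
    rw [this]; fun_prop
  -- a general rewriting of the total payoff
  have hJ : ∀ (u : Fin n → ℝ → ℝ) (x : ℝ → ℝ), (∀ i, Continuous (u i)) →
      (∀ t, HasDerivAt x ((∑ j, u j t) - δ * x t) t) → x t₀ = x₀ →
      (∑ i, ∫ t in t₀..T, (u i t * (b i - u i t / 2) - d i * x t))
        = (∫ t in t₀..T, ∑ i, (u i t * (b i - u i t / 2) - ψ t * u i t))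
          - ψ t₀ * x₀ := by
    intro u x huc hx hx0
    have hxc : Continuous x := continuous_iff_continuousAt.mpr fun t => (hx t).continuousAt
    have hScont : Continuous (fun t => ∑ j, u j t) :=
      continuous_finset_sum _ fun j _ => huc j
    have hfi : ∀ i : Fin n, Continuous (fun t => u i t * (b i - u i t / 2)) := by
      intro i; fun_prop
    have hsum : (∑ i, ∫ t in t₀..T, (u i t * (b i - u i t / 2) - d i * x t))
        = ∫ t in t₀..T, ∑ i, (u i t * (b i - u i t / 2) - d i * x t) :=
      (intervalIntegral.integral_finset_sum fun i _ =>
        (((hfi i).sub (continuous_const.mul hxc)).intervalIntegrable _ _)).symm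
    rw [hsum]
    have hre : ∀ t, (∑ i, (u i t * (b i - u i t / 2) - d i * x t))
        = (∑ i, u i t * (b i - u i t / 2)) - dN * x t := by
      intro t
      rw [Finset.sum_sub_distrib, ← Finset.sum_mul, hdN]
    have hre' : (∫ t in t₀..T, ∑ i, (u i t * (b i - u i t / 2) - d i * x t))
        = ∫ t in t₀..T, ((∑ i, u i t * (b i - u i t / 2)) - dN * x t) := by
      apply intervalIntegral.integral_congr
      intro t _; exact hre t
    rw [hre']
    have hA : Continuous (fun t => ∑ i, u i t * (b i - u i t / 2)) :=
      continuous_finset_sum _ fun i _ => hfi i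
    rw [intervalIntegral.integral_sub (g := fun t => dN * x t) (hA.intervalIntegrable _ _)
      ((continuous_const.mul hxc).intervalIntegrable _ _)]
    rw [stmt16_aux δ dN t₀ T hδ' _ x hScont hx, hx0]
    have hcomb : (∫ t in t₀..T, (dN / δ * (1 - Real.exp (δ * (t - T)))) * (∑ j, u j t))
        = ∫ t in t₀..T, ∑ i, ψ t * u i t := by
      apply intervalIntegral.integral_congr
      intro t _
      simp only [hψdef]
      rw [Finset.mul_sum]
    rw [hcomb]
    rw [intervalIntegral.integral_finset_sum (f := fun i t => ψ t * u i t)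
      (fun i _ => ((hψc.mul (huc i)).intervalIntegrable t₀ T))]
    rw [intervalIntegral.integral_finset_sum (f := fun i t => u i t * (b i - u i t / 2) - ψ t * u i t)
      (fun i _ => (((hfi i).sub (hψc.mul (huc i))).intervalIntegrable t₀ T))]
    rw [intervalIntegral.integral_finset_sum
      (fun i _ => ((hfi i).intervalIntegrable t₀ T))]
    have hsub : ∀ i : Fin n, (∫ t in t₀..T, (u i t * (b i - u i t / 2) - ψ t * u i t))
        = (∫ t in t₀..T, u i t * (b i - u i t / 2)) - ∫ t in t₀..T, ψ t * u i t :=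
      fun i => intervalIntegral.integral_sub ((hfi i).intervalIntegrable _ _)
        ((hψc.mul (huc i)).intervalIntegrable _ _)
    simp only [hsub]
    simp only [Finset.sum_sub_distrib, hψdef]
    ring
  rw [hJ uNE xNE hucNE hxNE hxNE0, hJ ustar xstar hucS hxs hxs0]
  have hIstar : IntervalIntegrable
      (fun t => ∑ i, (ustar i t * (b i - ustar i t / 2) - ψ t * ustar i t))
      MeasureTheory.volume t₀ T := by
    apply Continuous.intervalIntegrable
    apply continuous_finset_sum
    intro i _
    have := hucS i
    fun_prop
  have hINE : IntervalIntegrable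
      (fun t => ∑ i, (uNE i t * (b i - uNE i t / 2) - ψ t * uNE i t))
      MeasureTheory.volume t₀ T := by
    apply Continuous.intervalIntegrable
    apply continuous_finset_sum
    intro i _
    have := hucNE i
    fun_prop
  have hptw : ∀ t, (∑ i, (ustar i t * (b i - ustar i t / 2) - ψ t * ustar i t))
      - (∑ i, (uNE i t * (b i - uNE i t / 2) - ψ t * uNE i t))
      = ∑ i, (ustar i t - uNE i t) ^ 2 / 2 := by
    intro t
    rw [← Finset.sum_sub_distrib]
    apply Finset.sum_congr rfl
    intro i _
    rw [hNE i t, hst i t]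
    simp only [hψdef]
    field_simp
    ring
  have hdiff : (∫ t in t₀..T, ∑ i, (ustar i t * (b i - ustar i t / 2) - ψ t * ustar i t))
      - (∫ t in t₀..T, ∑ i, (uNE i t * (b i - uNE i t / 2) - ψ t * uNE i t))
      = ∫ t in t₀..T, ∑ i, (ustar i t - uNE i t) ^ 2 / 2 := by
    rw [← intervalIntegral.integral_sub hIstar hINE]
    apply intervalIntegral.integral_congr
    intro t _
    exact hptw t
  -- dN > d 0
  obtain ⟨m, rfl⟩ : ∃ m, n = m + 2 := ⟨n - 2, by omega⟩
  have h01 : (0 : Fin (m + 2)) ≠ 1 := Fin.ne_of_val_ne (by simp)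
  have hd0 : d 0 < dN := by
    have hsub := Finset.sum_le_sum_of_subset_of_nonneg
      (Finset.subset_univ ({0, 1} : Finset (Fin (m + 2)))) (fun i _ _ => (hd i).le)
    rw [Finset.sum_pair h01] at hsub
    have := hd 1
    linarith [hdN ▸ hsub]
  have hpos : 0 < ∫ t in t₀..T, ∑ i, (ustar i t - uNE i t) ^ 2 / 2 := by
    apply intervalIntegral.intervalIntegral_pos_of_pos_on
    · apply Continuous.intervalIntegrable
      apply continuous_finset_sum
      intro i _
      have h1 := hucS i
      have h2 := hucNE i
      fun_prop
    · intro t htt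
      apply Finset.sum_pos' (fun i _ => by positivity)
      refine ⟨0, Finset.mem_univ _, ?_⟩
      have hexp : Real.exp (δ * (t - T)) < 1 := by
        rw [Real.exp_lt_one_iff]
        nlinarith [htt.2]
      have hneg : ustar 0 t - uNE 0 t < 0 := by
        rw [hst, hNE]
        have heq : b 0 - dN / δ + dN / δ * Real.exp (δ * (t - T))
            - (b 0 - d 0 / δ + d 0 / δ * Real.exp (δ * (t - T)))
            = (dN - d 0) / δ * (Real.exp (δ * (t - T)) - 1) := by ring
        rw [heq]
        apply mul_neg_of_pos_of_neg
        · exact div_pos (by linarith) hδ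
        · linarith
      nlinarith [hneg]
    · exact ht
  linarith [hdiff, hpos]
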